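/- Let T be a cyclic group of collineations of PG(3,q) of order q^2+1 acting with q+1 orbits E_0,...,E_q on points, each orbit being an ovoid, and let S be the set of common tangent lines to all E_i. If ℓ is a line of PG(3,q) not in S, then the sum over t ∈ T of the characteristic vectors of the lines t(ℓ) in F_2^P equals the characteristic vector of the unique ovoid E_i to which ℓ is tangent. -/

import Mathlib

open scoped Classical
open Module

noncomputable section

variable (F : Type) [Field F] [Fintype F]

abbrev V4 := Fin 4 → F

def IsPt (p : Submodule F (V4 F)) : Prop := finrank F p = 1

def IsLn (L : Submodule F (V4 F)) : Prop := finrank F L = 2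

def ptsOn (L : Submodule F (V4 F)) : Set (Submodule F (V4 F)) :=
  {p | IsPt F p ∧ p ≤ L}

def Coll3 (p r s : Submodule F (V4 F)) : Prop :=
  ∃ L, IsLn F L ∧ p ≤ L ∧ r ≤ L ∧ s ≤ L

def IsOvoid (q : ℕ) (O : Set (Submodule F (V4 F))) : Prop :=
  (∀ p ∈ O, IsPt F p) ∧ O.ncard = q ^ 2 + 1 ∧
    ∀ p ∈ O, ∀ r ∈ O, ∀ s ∈ O, p ≠ r → p ≠ s → r ≠ s → ¬ Coll3 F p r s

def TotIso (B : LinearMap.BilinForm F (V4 F)) (L : Submodule F (V4 F)) : Prop :=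
  IsLn F L ∧ ∀ x ∈ L, ∀ y ∈ L, B x y = 0

def Pt := {p : Submodule F (V4 F) // IsPt F p}

def chi (s : Set (Submodule F (V4 F))) : Pt F → ZMod 2 :=
  fun p => if p.1 ∈ s then 1 else 0

def commonTangents (q : ℕ) (θ : Fin (q + 1) → Set (Submodule F (V4 F))) :
    Set (Submodule F (V4 F)) :=
  {L | IsLn F L ∧ ∀ i, (θ i ∩ ptsOn F L).ncard = 1}

def gridSet (B : LinearMap.BilinForm F (V4 F)) (m : Submodule F (V4 F)) :
    Set (Submodule F (V4 F)) :=
  ptsOn F m ∪ ptsOn F (LinearMap.BilinForm.orthogonal B m)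

def lineCode (B : LinearMap.BilinForm F (V4 F)) :
    Submodule (ZMod 2) (Pt F → ZMod 2) :=
  Submodule.span (ZMod 2) {w | ∃ L, TotIso F B L ∧ w = chi F (ptsOn F L)}

def gridCode (B : LinearMap.BilinForm F (V4 F)) :
    Submodule (ZMod 2) (Pt F → ZMod 2) :=
  Submodule.span (ZMod 2)
    {w | ∃ m, IsLn F m ∧ ¬ (∀ x ∈ m, ∀ y ∈ m, B x y = 0) ∧ w = chi F (gridSet F B m)}

set_option linter.unusedSectionVars false
section Aux
variable {F}

instance : Finite (Submodule F (V4 F)) :=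
  Finite.of_injective (fun W => (W : Set (V4 F))) SetLike.coe_injective

instance : Fintype (Submodule F (V4 F)) := Fintype.ofFinite _

lemma card_submodule (W : Submodule F (V4 F)) :
    Nat.card W = Fintype.card F ^ finrank F W := by
  rw [Nat.card_eq_fintype_card]
  exact card_eq_pow_finrank

lemma ncard_submodule (W : Submodule F (V4 F)) :
    (W : Set (V4 F)).ncard = Fintype.card F ^ finrank F W := by
  rw [← card_submodule, Nat.card_eq_fintype_card, Set.ncard_eq_toFinset_card']
  simp [Set.toFinset_card]

lemma ncard_diff_zero (W : Submodule F (V4 F)) :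
    ((W : Set (V4 F)) \ {0}).ncard = Fintype.card F ^ finrank F W - 1 := by
  rw [Set.ncard_diff (by simp [Set.singleton_subset_iff]), ncard_submodule,
    Set.ncard_singleton]

lemma span_eq_of_mem {p : Submodule F (V4 F)} (hp : IsPt F p) {x : V4 F}
    (hx : x ∈ p) (hx0 : x ≠ 0) : Submodule.span F {x} = p := by
  apply Submodule.eq_of_le_of_finrank_le
  · simpa [Submodule.span_le, Set.singleton_subset_iff] using hx
  · rw [hp]
    have := finrank_span_singleton (K := F) (V := V4 F) hx0
    omega

lemma pts_on_count {W : Submodule F (V4 F)} :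
    (ptsOn F W).ncard * (Fintype.card F - 1) = Fintype.card F ^ finrank F W - 1 := by
  classical
  set q := Fintype.card F with hq
  set S : Finset (V4 F) := ((W : Set (V4 F)) \ {0}).toFinset with hS
  set Tt : Finset (Submodule F (V4 F)) := (ptsOn F W).toFinset with hT
  have hmap : ∀ x ∈ S, Submodule.span F {x} ∈ Tt := by
    intro x hx
    rw [hS, Set.mem_toFinset] at hx
    obtain ⟨hxW, hx0⟩ := hx
    simp only [Set.mem_singleton_iff] at hx0
    rw [hT, Set.mem_toFinset]
    exact ⟨finrank_span_singleton hx0, by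
      simpa [Submodule.span_le, Set.singleton_subset_iff] using hxW⟩
  have hfib : ∀ p ∈ Tt, (S.filter (fun x => Submodule.span F {x} = p)).card = q - 1 := by
    intro p hp
    rw [hT, Set.mem_toFinset] at hp
    obtain ⟨hp1, hpW⟩ := hp
    have : (S.filter (fun x => Submodule.span F {x} = p)) =
        ((p : Set (V4 F)) \ {0}).toFinset := by
      ext x
      simp only [Finset.mem_filter, hS, Set.mem_toFinset, Set.mem_diff,
        Set.mem_singleton_iff]
      constructor
      · rintro ⟨⟨hxW, hx0⟩, hsp⟩
        exact ⟨hsp ▸ Submodule.mem_span_singleton_self x, hx0⟩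
      · rintro ⟨hxp, hx0⟩
        exact ⟨⟨hpW hxp, hx0⟩, span_eq_of_mem hp1 hxp hx0⟩
    rw [this, ← Set.ncard_eq_toFinset_card', ncard_diff_zero, hp1, pow_one]
  have hcount := Finset.card_eq_sum_card_fiberwise hmap
  rw [Finset.sum_congr rfl hfib, Finset.sum_const, smul_eq_mul] at hcount
  rw [Set.ncard_eq_toFinset_card' (ptsOn F W), ← hT, ← hcount, hS,
    ← Set.ncard_eq_toFinset_card', ncard_diff_zero]

lemma two_le_q : 2 ≤ Fintype.card F := Fintype.one_lt_card

lemma ncard_ptsOn_line {L : Submodule F (V4 F)} (hL : IsLn F L) :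
    (ptsOn F L).ncard = Fintype.card F + 1 := by
  have h := pts_on_count (W := L)
  rw [hL] at h
  have h2 : 2 ≤ Fintype.card F := two_le_q
  set q := Fintype.card F
  have : (q + 1) * (q - 1) = q ^ 2 - 1 := by
    have h1 : 1 ≤ q := by omega
    have h3 : 1 ≤ q ^ 2 := Nat.one_le_pow _ _ (by omega)
    zify [h1, h3]; ring
  rw [← this] at h
  exact Nat.eq_of_mul_eq_mul_right (by omega) h

lemma finrank_V4 : finrank F (V4 F) = 4 := by
  simpa using Module.finrank_fin_fun (R := F) (n := 4)

lemma card_V4 : Fintype.card (V4 F) = Fintype.card F ^ 4 := by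
  simp [Fintype.card_fun]

lemma pt_sup_span {p : Submodule F (V4 F)} (hp : IsPt F p) {x : V4 F}
    (hx : x ∉ p) : finrank F ↥(p ⊔ Submodule.span F {x}) = 2 := by
  have hx0 : x ≠ 0 := fun h => hx (h ▸ p.zero_mem)
  have hinf : p ⊓ Submodule.span F {x} = ⊥ := by
    rw [Submodule.eq_bot_iff]
    intro v hv
    rw [Submodule.mem_inf] at hv
    obtain ⟨hvp, hvs⟩ := hv
    rw [Submodule.mem_span_singleton] at hvs
    obtain ⟨c, rfl⟩ := hvs
    rcases eq_or_ne c 0 with rfl | hc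
    · simp
    · exact absurd ((Submodule.smul_mem_iff p hc).mp hvp) hx
  have := Submodule.finrank_sup_add_finrank_inf_eq p (Submodule.span F {x})
  rw [hinf, finrank_bot, hp, finrank_span_singleton hx0] at this
  omega

lemma line_eq_sup {p L : Submodule F (V4 F)} (hp : IsPt F p) (hL : IsLn F L)
    (hpL : p ≤ L) {x : V4 F} (hxL : x ∈ L) (hx : x ∉ p) :
    p ⊔ Submodule.span F {x} = L := by
  apply Submodule.eq_of_le_of_finrank_le
  · exact sup_le hpL (by simpa [Submodule.span_le, Set.singleton_subset_iff] using hxL)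
  · rw [hL, pt_sup_span hp hx]

lemma lines_thru_count {p : Submodule F (V4 F)} (hp : IsPt F p) :
    {L | IsLn F L ∧ p ≤ L}.ncard * (Fintype.card F ^ 2 - Fintype.card F)
      = Fintype.card F ^ 4 - Fintype.card F := by
  classical
  set q := Fintype.card F with hq
  set S : Finset (V4 F) := ((Set.univ : Set (V4 F)) \ (p : Set (V4 F))).toFinset with hS
  set Tt : Finset (Submodule F (V4 F)) := {L | IsLn F L ∧ p ≤ L}.toFinset with hT
  have hmap : ∀ x ∈ S, p ⊔ Submodule.span F {x} ∈ Tt := by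
    intro x hx
    rw [hS, Set.mem_toFinset] at hx
    have hx' : x ∉ p := hx.2
    rw [hT, Set.mem_toFinset]
    exact ⟨pt_sup_span hp hx', le_sup_left⟩
  have hfib : ∀ L ∈ Tt, (S.filter (fun x => p ⊔ Submodule.span F {x} = L)).card
      = q ^ 2 - q := by
    intro L hL
    rw [hT, Set.mem_toFinset] at hL
    obtain ⟨hL2, hpL⟩ := hL
    have hset : (S.filter (fun x => p ⊔ Submodule.span F {x} = L)) =
        ((L : Set (V4 F)) \ (p : Set (V4 F))).toFinset := by
      ext x
      simp only [Finset.mem_filter, hS, Set.mem_toFinset, Set.mem_diff, Set.mem_univ,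
        true_and, SetLike.mem_coe]
      constructor
      · rintro ⟨hxp, hsup⟩
        refine ⟨?_, hxp⟩
        rw [← hsup]
        exact le_sup_right (α := Submodule F (V4 F)) (Submodule.mem_span_singleton_self x)
      · rintro ⟨hxL, hxp⟩
        exact ⟨hxp, line_eq_sup hp hL2 hpL hxL hxp⟩
    rw [hset, ← Set.ncard_eq_toFinset_card', Set.ncard_diff
      (by exact_mod_cast hpL), ncard_submodule, ncard_submodule, hL2, hp, pow_one]
  have hcount := Finset.card_eq_sum_card_fiberwise hmap
  rw [Finset.sum_congr rfl hfib, Finset.sum_const, smul_eq_mul] at hcount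
  rw [Set.ncard_eq_toFinset_card' {L | IsLn F L ∧ p ≤ L}, ← hT, ← hcount, hS,
    ← Set.ncard_eq_toFinset_card', Set.ncard_diff (Set.subset_univ _),
    ncard_submodule, hp, pow_one, Set.ncard_univ, Nat.card_eq_fintype_card, card_V4]

lemma ncard_lines_thru {p : Submodule F (V4 F)} (hp : IsPt F p) :
    {L | IsLn F L ∧ p ≤ L}.ncard = Fintype.card F ^ 2 + Fintype.card F + 1 := by
  have h := lines_thru_count hp
  have h2 : 2 ≤ Fintype.card F := two_le_q
  set q := Fintype.card F
  have key : (q ^ 2 + q + 1) * (q ^ 2 - q) = q ^ 4 - q := by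
    have h1 : q ≤ q ^ 2 := by nlinarith
    have h3 : q ≤ q ^ 4 := by nlinarith
    zify [h1, h3]; ring
  rw [← key] at h
  have hlt : q < q ^ 2 := by nlinarith
  have hpos : 0 < q ^ 2 - q := by omega
  exact Nat.eq_of_mul_eq_mul_right hpos h

lemma unique_line {p r : Submodule F (V4 F)} (hp : IsPt F p) (hr : IsPt F r)
    (hpr : p ≠ r) : ∃! L, IsLn F L ∧ p ≤ L ∧ r ≤ L := by
  have hinf : p ⊓ r = ⊥ := by
    by_contra h
    have hle : p ⊓ r ≤ p := inf_le_left
    have h1 : finrank F ↥(p ⊓ r) ≠ 0 := by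
      intro h0
      exact h (Submodule.finrank_eq_zero.mp h0)
    have h2 : finrank F ↥(p ⊓ r) ≤ finrank F ↥p := Submodule.finrank_mono hle
    have heq : p ⊓ r = p := Submodule.eq_of_le_of_finrank_le hle (by rw [hp]; omega)
    have heq2 : p ≤ r := heq ▸ inf_le_right
    exact hpr (Submodule.eq_of_le_of_finrank_le heq2 (by rw [hp, hr]))
  have hsup : finrank F ↥(p ⊔ r) = 2 := by
    have := Submodule.finrank_sup_add_finrank_inf_eq p r
    rw [hinf, finrank_bot, hp, hr] at this
    omega
  refine ⟨p ⊔ r, ⟨hsup, le_sup_left, le_sup_right⟩, ?_⟩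
  rintro L ⟨hL, hpL, hrL⟩
  exact (Submodule.eq_of_le_of_finrank_le (sup_le hpL hrL) (by rw [hL, hsup])).symm

instance : Finite ((V4 F) →ₗ[F] (V4 F)) :=
  Finite.of_injective (fun f => (f : V4 F → V4 F)) DFunLike.coe_injective

instance : Finite ((V4 F) ≃ₗ[F] (V4 F)) :=
  Finite.of_injective (fun f => (f : (V4 F) →ₗ[F] (V4 F)))
    (fun a b h => LinearEquiv.toLinearMap_injective h)

lemma map_isLn (e : (V4 F) ≃ₗ[F] (V4 F)) {L : Submodule F (V4 F)} (hL : IsLn F L) :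
    IsLn F (Submodule.map e.toLinearMap L) := by
  unfold IsLn at *
  rw [LinearEquiv.finrank_map_eq e L]
  exact hL

lemma map_isPt (e : (V4 F) ≃ₗ[F] (V4 F)) {p : Submodule F (V4 F)} (hp : IsPt F p) :
    IsPt F (Submodule.map e.toLinearMap p) := by
  unfold IsPt at *
  rw [LinearEquiv.finrank_map_eq e p]
  exact hp

lemma map_mul_apply (e f : (V4 F) ≃ₗ[F] (V4 F)) (W : Submodule F (V4 F)) :
    Submodule.map (e * f).toLinearMap W
      = Submodule.map e.toLinearMap (Submodule.map f.toLinearMap W) := by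
  rw [← Submodule.map_comp]
  rfl

lemma map_one_apply (W : Submodule F (V4 F)) :
    Submodule.map (1 : (V4 F) ≃ₗ[F] (V4 F)).toLinearMap W = W := by
  change Submodule.map (LinearMap.id) W = W
  simp

lemma map_inv_cancel (e : (V4 F) ≃ₗ[F] (V4 F)) (W : Submodule F (V4 F)) :
    Submodule.map e⁻¹.toLinearMap (Submodule.map e.toLinearMap W) = W := by
  rw [← map_mul_apply, inv_mul_cancel, map_one_apply]

lemma map_inv_cancel' (e : (V4 F) ≃ₗ[F] (V4 F)) (W : Submodule F (V4 F)) :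
    Submodule.map e.toLinearMap (Submodule.map e⁻¹.toLinearMap W) = W := by
  rw [← map_mul_apply, mul_inv_cancel, map_one_apply]

lemma map_inj (e : (V4 F) ≃ₗ[F] (V4 F)) {W W' : Submodule F (V4 F)}
    (h : Submodule.map e.toLinearMap W = Submodule.map e.toLinearMap W') : W = W' := by
  have := congrArg (Submodule.map e⁻¹.toLinearMap) h
  rwa [map_inv_cancel, map_inv_cancel] at this

lemma map_mono' (e : (V4 F) ≃ₗ[F] (V4 F)) {W W' : Submodule F (V4 F)} (h : W ≤ W') :
    Submodule.map e.toLinearMap W ≤ Submodule.map e.toLinearMap W' :=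
  Submodule.map_mono h

lemma double_count {α β : Type*} (A : Finset α) (B : Finset β) (R : α → β → Prop) :
    ∑ a ∈ A, (B.filter (fun b => R a b)).card
      = ∑ b ∈ B, (A.filter (fun a => R a b)).card := by
  simp_rw [Finset.card_filter]
  rw [Finset.sum_comm]

end Aux

set_option maxHeartbeats 1000000 in
theorem stmt13 (q : ℕ) (hq : Fintype.card F = q) (n : ℕ) (hqn : q = 2 ^ n)
    (hq2 : 2 < q)
    (T : Subgroup ((V4 F) ≃ₗ[F] (V4 F))) (hcyc : IsCyclic T)
    (hTcard : Nat.card T = q ^ 2 + 1)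
    (E : Fin (q + 1) → Set (Submodule F (V4 F)))
    (hov : ∀ i, IsOvoid F q (E i))
    (hinv : ∀ i, ∀ t ∈ T, ∀ p ∈ E i,
      Submodule.map (t : (V4 F) ≃ₗ[F] (V4 F)).toLinearMap p ∈ E i)
    (htrans : ∀ i, ∀ p ∈ E i, ∀ r ∈ E i, ∃ t ∈ T,
      Submodule.map (t : (V4 F) ≃ₗ[F] (V4 F)).toLinearMap p = r)
    (hcover : ∀ p, IsPt F p → ∃ i, p ∈ E i)
    (hEdisj : ∀ i j, i ≠ j → Disjoint (E i) (E j))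
    (ℓ : Submodule F (V4 F)) (hl : IsLn F ℓ)
    (hlS : ℓ ∉ commonTangents F q E)
    (i : Fin (q + 1)) (hi : (E i ∩ ptsOn F ℓ).ncard = 1) :
    ∑ᶠ t : T,
        chi F (ptsOn F (Submodule.map ((t : (V4 F) ≃ₗ[F] (V4 F)) : (V4 F) ≃ₗ[F] (V4 F)).toLinearMap ℓ)) =
      chi F (E i) := by
  classical
  haveI : Fintype T := Fintype.ofFinite T
  have h2q : 2 < Fintype.card F := hq ▸ hq2
  have hqe : Even q := by
    have hn0 : n ≠ 0 := by rintro rfl; simp [hqn] at hq2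
    exact hqn ▸ (Nat.even_pow.mpr ⟨even_two, hn0⟩)
  set LinesF : Finset (Submodule F (V4 F)) := {L | IsLn F L}.toFinset with hLinesF
  set EF : Fin (q+1) → Finset (Submodule F (V4 F)) := fun j => (E j).toFinset with hEF
  set nn : Fin (q+1) → Submodule F (V4 F) → ℕ :=
    fun j m => ((EF j).filter (fun p => p ≤ m)).card with hnn
  set aa : Submodule F (V4 F) → ℕ :=
    fun m => (Finset.univ.filter (fun j => nn j m = 1)).card with haa
  have hEpts : ∀ j, ∀ p ∈ E j, IsPt F p := fun j => (hov j).1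
  have hEFcard : ∀ j, (EF j).card = q^2+1 := by
    intro j
    rw [hEF, ← Set.ncard_eq_toFinset_card']
    exact (hov j).2.1
  have hnn_eq : ∀ j m, IsLn F m → (E j ∩ ptsOn F m).ncard = nn j m := by
    intro j m hm
    rw [hnn, hEF]
    have : E j ∩ ptsOn F m = {p | p ∈ E j ∧ p ≤ m} := by
      ext p
      simp only [Set.mem_inter_iff, Set.mem_setOf_eq, ptsOn]
      exact ⟨fun ⟨h1, _, h3⟩ => ⟨h1, h3⟩, fun ⟨h1, h2⟩ => ⟨h1, hEpts j p h1, h2⟩⟩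
    rw [this, Set.ncard_eq_toFinset_card']
    congr 1
    ext p
    simp [Set.mem_toFinset]
  have hnn2 : ∀ j m, IsLn F m → nn j m ≤ 2 := by
    intro j m hm
    by_contra hgt
    push_neg at hgt
    rw [hnn] at hgt
    obtain ⟨p, hp, r, hr, s, hs, hprs⟩ := Finset.two_lt_card.mp hgt
    simp only [Finset.mem_filter, hEF, Set.mem_toFinset] at hp hr hs
    exact (hov j).2.2 p hp.1 r hr.1 s hs.1 hprs.1 hprs.2.1 hprs.2.2
      ⟨m, hm, hp.2, hr.2, hs.2⟩
  have hpart : ∀ m, Finset.univ.biUnion (fun j => (EF j).filter (fun p => p ≤ m))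
      = ({p | IsPt F p ∧ p ≤ m} : Set _).toFinset := by
    intro m
    ext p
    simp only [Finset.mem_biUnion, Finset.mem_filter, hEF, Set.mem_toFinset,
      Finset.mem_univ, true_and, Set.mem_setOf_eq]
    constructor
    · rintro ⟨j, hj, hle⟩
      exact ⟨hEpts j p hj, hle⟩
    · rintro ⟨hpt, hle⟩
      obtain ⟨j, hj⟩ := hcover p hpt
      exact ⟨j, hj, hle⟩
  have hdisjF : ∀ (j k : Fin (q+1)), j ≠ k →
      ∀ (m : Submodule F (V4 F)), Disjoint ((EF j).filter (fun p => p ≤ m))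
        ((EF k).filter (fun p => p ≤ m)) := by
    intro j k hjk m
    apply Finset.disjoint_left.mpr
    intro p hp hk
    simp only [Finset.mem_filter, hEF, Set.mem_toFinset] at hp hk
    exact Set.disjoint_left.mp (hEdisj j k hjk) hp.1 hk.1
  have hpts_part : ∀ m, IsLn F m → ∑ j, nn j m = q + 1 := by
    intro m hm
    rw [hnn]
    rw [← Finset.card_biUnion (fun j _ => fun k _ hjk => hdisjF j k hjk m), hpart m]
    rw [← Set.ncard_eq_toFinset_card']
    show (ptsOn F m).ncard = q + 1
    rw [ncard_ptsOn_line hm, hq]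
  have hthru : ∀ p, IsPt F p → (LinesF.filter (fun m => p ≤ m)).card = q^2+q+1 := by
    intro p hp
    have : LinesF.filter (fun m => p ≤ m) = ({L | IsLn F L ∧ p ≤ L} : Set _).toFinset := by
      ext m
      simp [hLinesF, Set.mem_toFinset]
    rw [this, ← Set.ncard_eq_toFinset_card', ncard_lines_thru hp, hq]
  have hPtsF : Finset.univ.biUnion EF = ({p | IsPt F p} : Set _).toFinset := by
    ext p
    simp only [Finset.mem_biUnion, hEF, Set.mem_toFinset, Finset.mem_univ, true_and,
      Set.mem_setOf_eq]
    exact ⟨fun ⟨j, hj⟩ => hEpts j p hj, fun hpt => hcover p hpt⟩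
  have hPtsFcard : ({p | IsPt F p} : Set _).toFinset.card = (q+1)*(q^2+1) := by
    rw [← hPtsF, Finset.card_biUnion]
    · rw [Finset.sum_congr rfl (fun j _ => hEFcard j)]
      simp [Finset.sum_const, mul_comm]
    · intro j _ k _ hjk
      rw [Function.onFun, hEF, Finset.disjoint_left]
      intro p hp hk
      rw [Set.mem_toFinset] at hp hk
      exact Set.disjoint_left.mp (hEdisj j k hjk) hp hk
  have hLcard : LinesF.card = (q^2+1)*(q^2+q+1) := by
    have hdc := double_count LinesF (({p | IsPt F p} : Set _).toFinset)
      (fun m p => p ≤ m)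
    have hlhs : ∀ m ∈ LinesF,
        ((({p | IsPt F p} : Set _).toFinset).filter (fun p => p ≤ m)).card = q + 1 := by
      intro m hm
      rw [hLinesF, Set.mem_toFinset] at hm
      have : (({p | IsPt F p} : Set _).toFinset).filter (fun p => p ≤ m)
          = (ptsOn F m).toFinset := by
        ext p
        simp only [Finset.mem_filter, Set.mem_toFinset, Set.mem_setOf_eq]
        exact Iff.rfl
      rw [this, ← Set.ncard_eq_toFinset_card', ncard_ptsOn_line hm, hq]
    have hrhs : ∀ p ∈ ({p | IsPt F p} : Set _).toFinset,
        (LinesF.filter (fun m => p ≤ m)).card = q^2+q+1 := by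
      intro p hp
      rw [Set.mem_toFinset] at hp
      exact hthru p hp
    rw [Finset.sum_congr rfl hlhs, Finset.sum_congr rfl hrhs, Finset.sum_const,
      Finset.sum_const, smul_eq_mul, smul_eq_mul, hPtsFcard] at hdc
    have hq1 : 0 < q + 1 := Nat.succ_pos q
    nlinarith [hdc]
  have hInc : ∀ j, ∑ m ∈ LinesF, nn j m = (q^2+1)*(q^2+q+1) := by
    intro j
    have hdc := double_count LinesF (EF j) (fun m p => p ≤ m)
    have hstep : ∀ p ∈ EF j, (LinesF.filter (fun m => p ≤ m)).card = q^2+q+1 := by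
      intro p hp
      simp only [hEF, Set.mem_toFinset] at hp
      exact hthru p (hEpts j p hp)
    rw [Finset.sum_congr rfl hstep, Finset.sum_const, smul_eq_mul, hEFcard] at hdc
    exact hdc
  have huniq : ∀ p r : Submodule F (V4 F), IsPt F p → IsPt F r → p ≠ r →
      (LinesF.filter (fun m => p ≤ m ∧ r ≤ m)).card = 1 := by
    intro p r hp hr hpr
    obtain ⟨L₀, hL₀, huni⟩ := unique_line hp hr hpr
    rw [Finset.card_eq_one]
    refine ⟨L₀, ?_⟩
    ext m
    simp only [Finset.mem_filter, hLinesF, Set.mem_toFinset, Set.mem_setOf_eq,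
      Finset.mem_singleton]
    constructor
    · rintro ⟨h1, h2, h3⟩
      exact huni m ⟨h1, h2, h3⟩
    · rintro rfl
      exact ⟨hL₀.1, hL₀.2.1, hL₀.2.2⟩
  have hne_of_mem : ∀ (j k : Fin (q+1)), j ≠ k → ∀ p ∈ E j, ∀ r ∈ E k, p ≠ r := by
    intro j k hjk p hp r hr
    intro h
    exact Set.disjoint_left.mp (hEdisj j k hjk) hp (h ▸ hr)
  have hCross : ∀ (j k : Fin (q+1)), j ≠ k →
      ∑ m ∈ LinesF, nn j m * nn k m = (q^2+1)*(q^2+1) := by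
    intro j k hjk
    have hdc : ∑ m ∈ LinesF,
        (((EF j) ×ˢ (EF k)).filter (fun pr => pr.1 ≤ m ∧ pr.2 ≤ m)).card
        = ∑ pr ∈ (EF j) ×ˢ (EF k),
          (LinesF.filter (fun m => pr.1 ≤ m ∧ pr.2 ≤ m)).card := by
      simp_rw [Finset.card_filter]
      rw [Finset.sum_comm]
    have hlhs : ∀ m ∈ LinesF,
        (((EF j) ×ˢ (EF k)).filter (fun pr => pr.1 ≤ m ∧ pr.2 ≤ m)).card
          = nn j m * nn k m := by
      intro m _
      have hset : ((EF j) ×ˢ (EF k)).filter (fun pr => pr.1 ≤ m ∧ pr.2 ≤ m)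
          = ((EF j).filter (fun p => p ≤ m)) ×ˢ ((EF k).filter (fun p => p ≤ m)) := by
        ext pr
        simp only [Finset.mem_filter, Finset.mem_product]
        tauto
      rw [hset, Finset.card_product]
    have hrhs : ∀ pr ∈ (EF j) ×ˢ (EF k),
        (LinesF.filter (fun m => pr.1 ≤ m ∧ pr.2 ≤ m)).card = 1 := by
      intro pr hpr
      rw [Finset.mem_product] at hpr
      simp only [hEF, Set.mem_toFinset] at hpr
      exact huniq pr.1 pr.2 (hEpts j _ hpr.1) (hEpts k _ hpr.2)
        (hne_of_mem j k hjk _ hpr.1 _ hpr.2)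
    rw [Finset.sum_congr rfl hlhs, Finset.sum_congr rfl hrhs, Finset.sum_const,
      smul_eq_mul, mul_one, Finset.card_product, hEFcard, hEFcard] at hdc
    exact hdc
  have hSec : ∀ j : Fin (q+1),
      ∑ m ∈ LinesF, nn j m * (nn j m - 1) = (q^2+1)*q^2 := by
    intro j
    have hdc : ∑ m ∈ LinesF,
        (((EF j).offDiag).filter (fun pr => pr.1 ≤ m ∧ pr.2 ≤ m)).card
        = ∑ pr ∈ (EF j).offDiag,
          (LinesF.filter (fun m => pr.1 ≤ m ∧ pr.2 ≤ m)).card := by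
      simp_rw [Finset.card_filter]
      rw [Finset.sum_comm]
    have hlhs : ∀ m ∈ LinesF,
        (((EF j).offDiag).filter (fun pr => pr.1 ≤ m ∧ pr.2 ≤ m)).card
          = nn j m * (nn j m - 1) := by
      intro m _
      have hset : ((EF j).offDiag).filter (fun pr => pr.1 ≤ m ∧ pr.2 ≤ m)
          = ((EF j).filter (fun p => p ≤ m)).offDiag := by
        ext pr
        simp only [Finset.mem_filter, Finset.mem_offDiag]
        tauto
      rw [hset, Finset.offDiag_card]
      have hc : nn j m = ((EF j).filter (fun p => p ≤ m)).card := rfl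
      rw [← hc]
      rcases Nat.eq_zero_or_pos (nn j m) with h0 | h0
      · simp [h0]
      · have h2 : nn j m * nn j m = nn j m * (nn j m - 1) + nn j m := by
          cases' nn j m with c
          · omega
          · simp only [Nat.succ_sub_one]
            ring
        omega
    have hrhs : ∀ pr ∈ (EF j).offDiag,
        (LinesF.filter (fun m => pr.1 ≤ m ∧ pr.2 ≤ m)).card = 1 := by
      intro pr hpr
      rw [Finset.mem_offDiag] at hpr
      obtain ⟨h1, h2, h3⟩ := hpr
      simp only [hEF, Set.mem_toFinset] at h1 h2
      exact huniq pr.1 pr.2 (hEpts j _ h1) (hEpts j _ h2) h3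
    rw [Finset.sum_congr rfl hlhs, Finset.sum_congr rfl hrhs, Finset.sum_const,
      smul_eq_mul, mul_one, Finset.offDiag_card, hEFcard] at hdc
    rw [hdc]
    have h2 : (q^2+1)*(q^2+1) = (q^2+1)*q^2 + (q^2+1) := by ring
    omega
  have hLn_mem : ∀ m, m ∈ LinesF ↔ IsLn F m := by
    intro m
    rw [hLinesF, Set.mem_toFinset]
    rfl
  have hq2odd : (q^2+1) % 2 = 1 := by
    have he : Even (q^2) := by
      rw [sq]
      exact hqe.mul_right q
    obtain ⟨c, hc⟩ := he
    omega
  have hTan : ∀ j : Fin (q+1),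
      ∑ m ∈ LinesF, (if nn j m = 1 then 1 else 0) = (q+1)*(q^2+1) := by
    intro j
    have hid : ∀ m ∈ LinesF,
        (if nn j m = 1 then 1 else 0) + nn j m * (nn j m - 1) = nn j m := by
      intro m hm
      have h2 := hnn2 j m ((hLn_mem m).mp hm)
      interval_cases (nn j m) <;> simp
    have hsum : ∑ m ∈ LinesF, ((if nn j m = 1 then 1 else 0) + nn j m * (nn j m - 1))
        = (q^2+1)*(q^2+q+1) := by
      rw [Finset.sum_congr rfl hid]
      exact hInc j
    rw [Finset.sum_add_distrib, hSec j] at hsum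
    have hr : (q^2+1)*(q^2+q+1) = (q+1)*(q^2+1) + (q^2+1)*q^2 := by ring
    omega
  have haa_card : ∀ m, aa m = ∑ j : Fin (q+1), (if nn j m = 1 then 1 else 0) := by
    intro m
    exact Finset.card_filter _ _
  have hSa : ∑ m ∈ LinesF, aa m = (q+1)*((q+1)*(q^2+1)) := by
    rw [Finset.sum_congr rfl (fun m _ => haa_card m), Finset.sum_comm]
    rw [Finset.sum_congr rfl (fun j _ => hTan j)]
    simp [Finset.sum_const, Finset.card_univ, mul_comm]
  have hfree : ∀ (s : T) (p : Submodule F (V4 F)), IsPt F p →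
      Submodule.map ((s : (V4 F) ≃ₗ[F] (V4 F))).toLinearMap p = p → s = 1 := by
    intro s p hpt hfix
    obtain ⟨c, hc⟩ := hcover p hpt
    set ψ : T → (E c : Set _) := fun t => ⟨Submodule.map ((t : (V4 F) ≃ₗ[F] (V4 F))).toLinearMap p,
      hinv c t.1 t.2 p hc⟩ with hψ
    have hsurj : Function.Surjective ψ := by
      rintro ⟨r, hr⟩
      obtain ⟨u, hu, heq⟩ := htrans c p hc r hr
      exact ⟨⟨u, hu⟩, Subtype.ext heq⟩
    have hcards : Nat.card T = Nat.card (E c : Set _) := by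
      rw [hTcard, Nat.card_coe_set_eq, (hov c).2.1]
    have hinj : Function.Injective ψ :=
      ((Nat.bijective_iff_surjective_and_card ψ).mpr ⟨hsurj, hcards⟩).1
    have h1 : ψ s = ψ 1 := by
      apply Subtype.ext
      simp only [hψ]
      rw [hfix]
      exact (map_one_apply p).symm
    exact hinj h1
  have hnn_map : ∀ (t : T) (j : Fin (q+1)) (m : Submodule F (V4 F)),
      nn j (Submodule.map ((t : (V4 F) ≃ₗ[F] (V4 F))).toLinearMap m) = nn j m := by
    intro t j m
    set e : (V4 F) ≃ₗ[F] (V4 F) := (t : (V4 F) ≃ₗ[F] (V4 F)) with he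
    have hset : (EF j).filter (fun p => p ≤ Submodule.map e.toLinearMap m)
        = Finset.image (fun p => Submodule.map e.toLinearMap p)
            ((EF j).filter (fun p => p ≤ m)) := by
      ext r
      simp only [Finset.mem_filter, Finset.mem_image, hEF, Set.mem_toFinset]
      constructor
      · rintro ⟨hrE, hrle⟩
        refine ⟨Submodule.map e⁻¹.toLinearMap r, ⟨?_, ?_⟩, map_inv_cancel' e r⟩
        · have : ((t⁻¹ : T) : (V4 F) ≃ₗ[F] (V4 F)) = e⁻¹ := by
            rw [he]; rfl
          exact this ▸ hinv j ((t⁻¹ : T) : (V4 F) ≃ₗ[F] (V4 F)) (t⁻¹).2 r hrE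
        · have := map_mono' e⁻¹ hrle
          rwa [map_inv_cancel] at this
      · rintro ⟨x, ⟨hxE, hxle⟩, rfl⟩
        exact ⟨hinv j e t.2 x hxE, map_mono' e hxle⟩
    have h1 : nn j (Submodule.map e.toLinearMap m)
        = ((EF j).filter (fun p => p ≤ Submodule.map e.toLinearMap m)).card := rfl
    have h2 : nn j m = ((EF j).filter (fun p => p ≤ m)).card := rfl
    rw [h1, h2, hset, Finset.card_image_of_injective _ (fun a b h => map_inj e h)]
  have hTauPos : ∀ (j k : Fin (q+1)), j ≠ k →
      (q^2+1) ≤ (LinesF.filter (fun m => nn j m = 1 ∧ nn k m = 1)).card := by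
    intro j k hjk
    -- parity: the count is odd, hence the filter is nonempty
    have hmod : (∑ m ∈ LinesF, nn j m * nn k m) % 2
        = (LinesF.filter (fun m => nn j m = 1 ∧ nn k m = 1)).card % 2 := by
      rw [Finset.sum_nat_mod]
      have : ∀ m ∈ LinesF, nn j m * nn k m % 2
          = (if nn j m = 1 ∧ nn k m = 1 then 1 else 0) := by
        intro m hm
        have h2j := hnn2 j m ((hLn_mem m).mp hm)
        have h2k := hnn2 k m ((hLn_mem m).mp hm)
        interval_cases (nn j m) <;> interval_cases (nn k m) <;> simp
      rw [Finset.sum_congr rfl this, ← Finset.card_filter]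
    rw [hCross j k hjk] at hmod
    have hoddprod : ((q^2+1) * (q^2+1)) % 2 = 1 := by
      rcases Nat.even_or_odd (q^2+1) with he | ho
      · obtain ⟨c, hc⟩ := he; omega
      · exact Nat.odd_iff.mp (ho.mul ho)
    have hne : (LinesF.filter (fun m => nn j m = 1 ∧ nn k m = 1)).Nonempty := by
      rw [← Finset.card_pos]
      omega
    obtain ⟨m₀, hm₀⟩ := hne
    rw [Finset.mem_filter] at hm₀
    obtain ⟨hm₀L, hm₀j, hm₀k⟩ := hm₀
    -- the orbit of m₀ under T injects into the filter set
    have hmaps : ∀ t : T, t ∈ (Finset.univ : Finset T) →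
        Submodule.map ((t : (V4 F) ≃ₗ[F] (V4 F))).toLinearMap m₀
          ∈ LinesF.filter (fun m => nn j m = 1 ∧ nn k m = 1) := by
      intro t _
      rw [Finset.mem_filter]
      refine ⟨(hLn_mem _).mpr (map_isLn _ ((hLn_mem m₀).mp hm₀L)), ?_, ?_⟩
      · rw [hnn_map t j m₀]; exact hm₀j
      · rw [hnn_map t k m₀]; exact hm₀k
    have hinj : Set.InjOn (fun t : T =>
        Submodule.map ((t : (V4 F) ≃ₗ[F] (V4 F))).toLinearMap m₀)
        ((Finset.univ : Finset T) : Set T) := by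
      intro s _ t _ hst
      simp only [] at hst
      -- w := s⁻¹ * t fixes m₀
      have hw : Submodule.map (((s⁻¹ * t : T) : (V4 F) ≃ₗ[F] (V4 F))).toLinearMap m₀ = m₀ := by
        have hcoe : ((s⁻¹ * t : T) : (V4 F) ≃ₗ[F] (V4 F))
            = ((s : (V4 F) ≃ₗ[F] (V4 F)))⁻¹ * ((t : (V4 F) ≃ₗ[F] (V4 F))) := by
          push_cast
          rfl
        rw [hcoe, map_mul_apply, ← hst]
        exact map_inv_cancel _ _
      -- m₀ is tangent to E j at a unique point p₀
      obtain ⟨p₀, hp₀⟩ := Finset.card_eq_one.mp hm₀j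
      have hp₀mem : p₀ ∈ (EF j).filter (fun p => p ≤ m₀) := by
        rw [hp₀]; exact Finset.mem_singleton_self p₀
      rw [Finset.mem_filter] at hp₀mem
      have hp₀E : p₀ ∈ E j := by
        have := hp₀mem.1
        simpa [hEF, Set.mem_toFinset] using this
      have hp₀pt : IsPt F p₀ := hEpts j p₀ hp₀E
      have hfixp : Submodule.map (((s⁻¹ * t : T) : (V4 F) ≃ₗ[F] (V4 F))).toLinearMap p₀ = p₀ := by
        have hmem : Submodule.map (((s⁻¹ * t : T) : (V4 F) ≃ₗ[F] (V4 F))).toLinearMap p₀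
            ∈ (EF j).filter (fun p => p ≤ m₀) := by
          rw [Finset.mem_filter]
          constructor
          · simp only [hEF, Set.mem_toFinset]
            exact hinv j _ (s⁻¹ * t).2 p₀ hp₀E
          · have := map_mono' (((s⁻¹ * t : T) : (V4 F) ≃ₗ[F] (V4 F))) hp₀mem.2
            rwa [hw] at this
        rw [hp₀] at hmem
        exact Finset.mem_singleton.mp hmem
      have : s⁻¹ * t = 1 := hfree (s⁻¹ * t) p₀ hp₀pt hfixp
      exact inv_mul_eq_one.mp this
    have := Finset.card_le_card_of_injOn _ hmaps hinj
    rwa [Finset.card_univ, ← Nat.card_eq_fintype_card, hTcard] at this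
  -- the quadratic sum: lower bound via common tangent pairs
  have haa1 : ∀ m ∈ LinesF, 1 ≤ aa m := by
    intro m hm
    have hsum := hpts_part m ((hLn_mem m).mp hm)
    have hmod : (∑ j, nn j m) % 2 = aa m % 2 := by
      rw [Finset.sum_nat_mod]
      have : ∀ j : Fin (q+1), j ∈ Finset.univ → nn j m % 2
          = (if nn j m = 1 then 1 else 0) := by
        intro j _
        have h2 := hnn2 j m ((hLn_mem m).mp hm)
        interval_cases (nn j m) <;> simp
      rw [Finset.sum_congr rfl this, ← Finset.card_filter]
    rw [hsum] at hmod
    obtain ⟨c, hc⟩ := hqe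
    omega
  have haaq : ∀ m, aa m ≤ q + 1 := by
    intro m
    have := Finset.card_filter_le (Finset.univ : Finset (Fin (q+1)))
      (fun j => nn j m = 1)
    simpa using this
  have hlower : (q+1)*q*(q^2+1) ≤ ∑ m ∈ LinesF, aa m * (aa m - 1) := by
    have hid : ∀ m ∈ LinesF, aa m * (aa m - 1)
        = (((Finset.univ : Finset (Fin (q+1))).offDiag).filter
            (fun pr => nn pr.1 m = 1 ∧ nn pr.2 m = 1)).card := by
      intro m _
      have hset : ((Finset.univ : Finset (Fin (q+1))).offDiag).filter
            (fun pr => nn pr.1 m = 1 ∧ nn pr.2 m = 1)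
          = ((Finset.univ : Finset (Fin (q+1))).filter (fun j => nn j m = 1)).offDiag := by
        ext pr
        simp only [Finset.mem_filter, Finset.mem_offDiag, Finset.mem_univ, true_and]
        tauto
      rw [hset, Finset.offDiag_card]
      have hc : aa m = ((Finset.univ : Finset (Fin (q+1))).filter (fun j => nn j m = 1)).card := rfl
      rw [← hc]
      rcases Nat.eq_zero_or_pos (aa m) with h0 | h0
      · simp [h0]
      · have h2 : aa m * aa m = aa m * (aa m - 1) + aa m := by
          cases' aa m with c
          · omega
          · simp only [Nat.succ_sub_one]
            ring
        omega
    have hdc : ∑ m ∈ LinesF,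
        (((Finset.univ : Finset (Fin (q+1))).offDiag).filter
          (fun pr => nn pr.1 m = 1 ∧ nn pr.2 m = 1)).card
        = ∑ pr ∈ (Finset.univ : Finset (Fin (q+1))).offDiag,
          (LinesF.filter (fun m => nn pr.1 m = 1 ∧ nn pr.2 m = 1)).card := by
      simp_rw [Finset.card_filter]
      rw [Finset.sum_comm]
    rw [Finset.sum_congr rfl hid, hdc]
    have hbound : ∀ pr ∈ (Finset.univ : Finset (Fin (q+1))).offDiag,
        (q^2+1) ≤ (LinesF.filter (fun m => nn pr.1 m = 1 ∧ nn pr.2 m = 1)).card := by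
      intro pr hpr
      rw [Finset.mem_offDiag] at hpr
      exact hTauPos pr.1 pr.2 hpr.2.2
    calc (q+1)*q*(q^2+1)
        = ((Finset.univ : Finset (Fin (q+1))).offDiag).card * (q^2+1) := by
          rw [Finset.offDiag_card, Finset.card_univ, Fintype.card_fin]
          have : (q+1)*(q+1) = (q+1)*q + (q+1) := by ring
          rw [this]
          simp [Nat.add_sub_cancel]
      _ = ∑ _pr ∈ (Finset.univ : Finset (Fin (q+1))).offDiag, (q^2+1) := by
          rw [Finset.sum_const, smul_eq_mul]
      _ ≤ ∑ pr ∈ (Finset.univ : Finset (Fin (q+1))).offDiag,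
            (LinesF.filter (fun m => nn pr.1 m = 1 ∧ nn pr.2 m = 1)).card :=
          Finset.sum_le_sum hbound
  have hupper : ∀ m ∈ LinesF, aa m * (aa m - 1) ≤ (q+1) * (aa m - 1) :=
    fun m _ => Nat.mul_le_mul_right _ (haaq m)
  have hsum_upper : ∑ m ∈ LinesF, (q+1) * (aa m - 1) = (q+1)*q*(q^2+1) := by
    have hid : ∀ m ∈ LinesF, (q+1) * (aa m - 1) + (q+1) = (q+1) * aa m := by
      intro m hm
      have h1 := haa1 m hm
      cases' haam : aa m with c
      · omega
      · simp only [Nat.succ_sub_one, Nat.mul_succ]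
    have hthis := Finset.sum_congr rfl hid
    rw [Finset.sum_add_distrib, Finset.sum_const, smul_eq_mul, hLcard] at hthis
    have h3 : ∑ m ∈ LinesF, (q+1) * aa m = (q + 1) * ((q + 1) * ((q + 1) * (q ^ 2 + 1))) := by
      rw [← Finset.mul_sum, hSa]
    rw [h3] at hthis
    have hident : (q + 1) * ((q + 1) * ((q + 1) * (q ^ 2 + 1)))
        = (q+1)*q*(q^2+1) + (q ^ 2 + 1) * (q ^ 2 + q + 1) * (q + 1) := by ring
    omega
  have heqpt : ∀ m ∈ LinesF, aa m * (aa m - 1) = (q+1) * (aa m - 1) := by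
    have hle : ∑ m ∈ LinesF, aa m * (aa m - 1) ≤ ∑ m ∈ LinesF, (q+1) * (aa m - 1) :=
      Finset.sum_le_sum hupper
    have heq : ∑ m ∈ LinesF, aa m * (aa m - 1) = ∑ m ∈ LinesF, (q+1) * (aa m - 1) := by
      rw [hsum_upper]
      omega
    exact (Finset.sum_eq_sum_iff_of_le hupper).mp heq
  -- the line ℓ is tangent to exactly one ovoid, namely E i
  have hℓmem : ℓ ∈ LinesF := (hLn_mem ℓ).mpr hl
  have hiℓ : nn i ℓ = 1 := by rw [← hnn_eq i ℓ hl]; exact hi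
  have haaℓ : aa ℓ = 1 := by
    by_contra hne
    have h1 := haa1 ℓ hℓmem
    have heq := heqpt ℓ hℓmem
    have hpos : 0 < aa ℓ - 1 := by omega
    have haaq1 : aa ℓ = q + 1 := Nat.eq_of_mul_eq_mul_right hpos heq
    have hall : ∀ j, nn j ℓ = 1 := by
      intro j
      have huniv : (Finset.univ.filter (fun j => nn j ℓ = 1))
          = (Finset.univ : Finset (Fin (q+1))) := by
        apply Finset.eq_univ_of_card
        rw [show (Finset.univ.filter (fun j => nn j ℓ = 1)).card = aa ℓ from rfl,
          haaq1, Fintype.card_fin]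
      have : j ∈ Finset.univ.filter (fun j => nn j ℓ = 1) := by
        rw [huniv]; exact Finset.mem_univ j
      exact (Finset.mem_filter.mp this).2
    exact hlS ⟨hl, fun j => by rw [hnn_eq j ℓ hl]; exact hall j⟩
  have hne1 : ∀ j, j ≠ i → nn j ℓ ≠ 1 := by
    intro j hj hnnj
    have hjf : j ∈ Finset.univ.filter (fun k => nn k ℓ = 1) :=
      Finset.mem_filter.mpr ⟨Finset.mem_univ j, hnnj⟩
    have hif : i ∈ Finset.univ.filter (fun k => nn k ℓ = 1) :=
      Finset.mem_filter.mpr ⟨Finset.mem_univ i, hiℓ⟩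
    have : j = i := Finset.card_le_one.mp (le_of_eq haaℓ) j hjf i hif
    exact hj this
  -- final evaluation of the group-orbit sum
  funext p
  rw [finsum_eq_sum_of_fintype, Finset.sum_apply]
  have hchi : ∀ t : T, chi F (ptsOn F (Submodule.map
      ((t : (V4 F) ≃ₗ[F] (V4 F)) : (V4 F) ≃ₗ[F] (V4 F)).toLinearMap ℓ)) p
      = if p.1 ∈ ptsOn F (Submodule.map ((t : (V4 F) ≃ₗ[F] (V4 F))).toLinearMap ℓ)
          then 1 else 0 := fun t => rfl
  rw [Finset.sum_congr rfl (fun t _ => hchi t), Finset.sum_boole]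
  have hppt : IsPt F p.1 := p.2
  obtain ⟨c, hc⟩ := hcover p.1 hppt
  have hcount : (Finset.univ.filter (fun t : T =>
      p.1 ∈ ptsOn F (Submodule.map ((t : (V4 F) ≃ₗ[F] (V4 F))).toLinearMap ℓ))).card
      = nn c ℓ := by
    apply Finset.card_bij (fun (t : T) _ =>
      Submodule.map (((t : (V4 F) ≃ₗ[F] (V4 F)))⁻¹).toLinearMap p.1)
    · intro t ht
      rw [Finset.mem_filter] at ht
      obtain ⟨-, hpt, hple⟩ := ht
      rw [Finset.mem_filter]
      constructor
      · simp only [hEF, Set.mem_toFinset]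
        have hco : ((t⁻¹ : T) : (V4 F) ≃ₗ[F] (V4 F)) = ((t : (V4 F) ≃ₗ[F] (V4 F)))⁻¹ := rfl
        exact hco ▸ hinv c _ (t⁻¹).2 p.1 hc
      · have := map_mono' (((t : (V4 F) ≃ₗ[F] (V4 F)))⁻¹) hple
        rwa [map_inv_cancel] at this
    · intro t ht s hs hts
      have happ := congrArg (Submodule.map ((s : (V4 F) ≃ₗ[F] (V4 F))).toLinearMap) hts
      rw [map_inv_cancel'] at happ
      rw [← map_mul_apply] at happ
      have hco : ((s * t⁻¹ : T) : (V4 F) ≃ₗ[F] (V4 F))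
          = (s : (V4 F) ≃ₗ[F] (V4 F)) * ((t : (V4 F) ≃ₗ[F] (V4 F)))⁻¹ := rfl
      have hone : (s * t⁻¹ : T) = 1 := by
        apply hfree (s * t⁻¹) p.1 hppt
        rw [hco]
        exact happ
      have : s = t := by
        have := mul_inv_eq_one.mp hone
        exact this
      exact this.symm
    · intro r hr
      rw [Finset.mem_filter] at hr
      obtain ⟨hrE, hrle⟩ := hr
      have hrE' : r ∈ E c := by simpa [hEF, Set.mem_toFinset] using hrE
      obtain ⟨u, hu, humap⟩ := htrans c r hrE' p.1 hc
      refine ⟨⟨u, hu⟩, ?_, ?_⟩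
      · rw [Finset.mem_filter]
        refine ⟨Finset.mem_univ _, hppt, ?_⟩
        have : Submodule.map ((⟨u, hu⟩ : T) : (V4 F) ≃ₗ[F] (V4 F)).toLinearMap r
            ≤ Submodule.map (((⟨u, hu⟩ : T) : (V4 F) ≃ₗ[F] (V4 F))).toLinearMap ℓ :=
          map_mono' _ hrle
        rw [show Submodule.map ((⟨u, hu⟩ : T) : (V4 F) ≃ₗ[F] (V4 F)).toLinearMap r = p.1
          from humap] at this
        exact this
      · have := congrArg (Submodule.map ((u⁻¹ : (V4 F) ≃ₗ[F] (V4 F))).toLinearMap) humap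
        rw [show Submodule.map ((u⁻¹ : (V4 F) ≃ₗ[F] (V4 F))).toLinearMap
            (Submodule.map ((⟨u, hu⟩ : T) : (V4 F) ≃ₗ[F] (V4 F)).toLinearMap r) = r
          from map_inv_cancel u r] at this
        exact this.symm
  rw [hcount]
  by_cases hpi : p.1 ∈ E i
  · have hci : c = i := by
      by_contra hci
      exact Set.disjoint_left.mp (hEdisj c i hci) hc hpi
    rw [hci] at *
    rw [hiℓ]
    simp [chi, hpi]
  · have hci : c ≠ i := fun h => hpi (h ▸ hc)
    have hn1 := hne1 c hci
    have hn2 := hnn2 c ℓ hl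
    have : (nn c ℓ : ZMod 2) = 0 := by
      interval_cases (nn c ℓ)
      · simp
      · simp at hn1
      · rfl
    rw [this]
    simp [chi, hpi]
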